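/- Let V_• be a quasi-bounded cochain complex of finite-dimensional vector spaces and φ_• a chain endomorphism with tr(φ_i) = 0 and tr(φ_i^H) = 0 for all i. Then the restriction of φ to the boundaries satisfies tr(φ_i^B) = 0 for all i, where φ_i^B is the induced endomorphism of B_i = im(d_{i-1}). -/

import Mathlib

open CategoryTheory

/-- The subspace of boundaries `B i = im (d_{i-1})` of a cochain complex. -/
noncomputable def bdry {k : Type*} [Field k] (V : CochainComplex (ModuleCat k) ℤ)
    (i : ℤ) : Submodule k (V.X i) :=
  LinearMap.range (V.d (i - 1) i).hom

section aux
variable {k : Type*} [Field k]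

lemma my_trace_eq_of_equiv {M N : Type*} [AddCommGroup M] [Module k M] [AddCommGroup N]
    [Module k N] (e : M ≃ₗ[k] N) (f : M →ₗ[k] M) (g : N →ₗ[k] N)
    (h : ∀ x, e (f x) = g (e x)) :
    LinearMap.trace k M f = LinearMap.trace k N g := by
  rw [← LinearMap.trace_conj' f e]
  congr 1
  ext x
  simp only [LinearEquiv.conj_apply, LinearMap.coe_comp, LinearEquiv.coe_coe,
    Function.comp_apply, h, LinearEquiv.apply_symm_apply]

lemma my_trace_restrict_congr {M : Type*} [AddCommGroup M] [Module k M]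
    {p q : Submodule k M} (h : p = q) (f : M →ₗ[k] M)
    (hp : ∀ x ∈ p, f x ∈ p) (hq : ∀ x ∈ q, f x ∈ q) :
    LinearMap.trace k p (f.restrict hp) = LinearMap.trace k q (f.restrict hq) := by
  subst h; rfl

lemma my_trace_restrict_add_mapQ {M : Type*} [AddCommGroup M] [Module k M]
    [FiniteDimensional k M] (p : Submodule k M) (f : M →ₗ[k] M) (h : ∀ x ∈ p, f x ∈ p) :
    LinearMap.trace k M f =
      LinearMap.trace k p (f.restrict h) +
        LinearMap.trace k (M ⧸ p) (p.mapQ p f fun x hx => h x hx) := by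
  obtain ⟨q, hq⟩ := Submodule.exists_isCompl p
  set A := f.restrict h with hA
  set D := p.mapQ p f (fun x hx => h x hx) with hD
  let e₁ := Submodule.prodEquivOfIsCompl p q hq
  let e₂ := Submodule.quotientEquivOfIsCompl p q hq
  let e : M ≃ₗ[k] ↥p × (M ⧸ p) :=
    e₁.symm ≪≫ₗ LinearEquiv.prodCongr (LinearEquiv.refl k ↥p) e₂.symm
  have fact0 : ∀ m : M, (e m).2 = Submodule.Quotient.mk m := by
    intro m
    obtain ⟨u, hu⟩ : ∃ u : ↥p × ↥q, e₁.symm m = u := ⟨_, rfl⟩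
    have hm : ((u.1 : M) + (u.2 : M)) = m := by
      rw [← Submodule.coe_prodEquivOfIsCompl' p q hq u, ← hu, e₁.apply_symm_apply]
    show e₂.symm (e₁.symm m).2 = Submodule.Quotient.mk m
    rw [hu, Submodule.quotientEquivOfIsCompl_symm_apply, Submodule.Quotient.eq, ← hm]
    simpa using neg_mem u.1.2
  have fact1 : ∀ x : ↥p, e (x : M) = (x, 0) := by
    intro x
    show ((e₁.symm (x : M)).1, e₂.symm (e₁.symm (x : M)).2) = (x, 0)
    rw [Submodule.prodEquivOfIsCompl_symm_apply_left]
    simp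
  have hesymm : ∀ x : ↥p, e.symm (x, 0) = (x : M) := by
    intro x
    rw [LinearEquiv.symm_apply_eq, fact1]
  set B : (M ⧸ p) →ₗ[k] ↥p :=
    (LinearMap.fst k ↥p (M ⧸ p)) ∘ₗ (e.conj f : ↥p × (M ⧸ p) →ₗ[k] ↥p × (M ⧸ p)) ∘ₗ
      (LinearMap.inr k ↥p (M ⧸ p)) with hB
  have conj_apply : ∀ z : ↥p × (M ⧸ p), e.conj f z = e (f (e.symm z)) := by
    intro z; simp [LinearEquiv.conj_apply]
  have snd_conj : ∀ z : ↥p × (M ⧸ p), (e.conj f z).2 = D z.2 := by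
    intro z
    rw [conj_apply, fact0]
    conv_rhs => rw [← e.apply_symm_apply z]
    rw [fact0, hD, Submodule.mapQ_apply]
  have fst_inl : ∀ x : ↥p, e.conj f (x, 0) = ((A x : ↥p), (0 : M ⧸ p)) := by
    intro x
    rw [conj_apply, hesymm]
    have hfx : f (x : M) = ((A x : ↥p) : M) := rfl
    rw [hfx, fact1]
  have key : (e.conj f : ↥p × (M ⧸ p) →ₗ[k] ↥p × (M ⧸ p)) =
      A.prodMap D + (LinearMap.inl k ↥p (M ⧸ p)) ∘ₗ B ∘ₗ (LinearMap.snd k ↥p (M ⧸ p)) := by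
    apply LinearMap.ext
    intro z
    have dec : (e.conj f : ↥p × (M ⧸ p) →ₗ[k] ↥p × (M ⧸ p)) z =
        e.conj f (z.1, 0) + e.conj f (0, z.2) := by
      rw [← map_add]; congr 1; ext <;> simp
    have hBz : (e.conj f (0, z.2)).1 = B z.2 := rfl
    have hDz : (e.conj f (0, z.2)).2 = D z.2 := by
      rw [snd_conj]
    rw [dec, fst_inl]
    apply Prod.ext
    · simp [hBz]
      rw [← conj_apply]; exact hBz
    · simp [hDz]
      rw [← conj_apply]; exact hDz
  rw [← LinearMap.trace_conj' f e, key, map_add, LinearMap.trace_prodMap']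
  have hz : LinearMap.trace k (↥p × (M ⧸ p))
      ((LinearMap.inl k ↥p (M ⧸ p)) ∘ₗ B ∘ₗ (LinearMap.snd k ↥p (M ⧸ p))) = 0 := by
    rw [LinearMap.trace_comp_comm']
    have : (B ∘ₗ (LinearMap.snd k ↥p (M ⧸ p))) ∘ₗ (LinearMap.inl k ↥p (M ⧸ p)) = 0 := by
      ext z; simp
    rw [this, map_zero]
  rw [hz, add_zero]

end aux

section main
variable {k : Type*} [Field k] (V : CochainComplex (ModuleCat k) ℤ)
    [∀ i : ℤ, FiniteDimensional k (V.X i)] (φ : V ⟶ V)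

lemma my_key
    (htr : ∀ i : ℤ, LinearMap.trace k (V.X i) (φ.f i).hom = 0)
    (htrH : ∀ i : ℤ, LinearMap.trace k (V.homology i)
      (HomologicalComplex.homologyMap φ i).hom = 0)
    (hφB : ∀ i : ℤ, ∀ x ∈ bdry V i, φ.f i x ∈ bdry V i) (i : ℤ) :
    LinearMap.trace k (bdry V i) ((φ.f i).hom.restrict (hφB i)) +
      LinearMap.trace k (bdry V (i + 1)) ((φ.f (i + 1)).hom.restrict (hφB (i + 1))) = 0 := by
  have range_d_congr : ∀ (a b j : ℤ), a = b →
      LinearMap.range (V.d a j).hom = LinearMap.range (V.d b j).hom := by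
    rintro a b j rfl; rfl
  set p := (ComplexShape.up ℤ).prev i with hpdef
  set n := (ComplexShape.up ℤ).next i with hndef
  have hp : p = i - 1 := (ComplexShape.up ℤ).prev_eq' (by simp)
  have hn : n = i + 1 := (ComplexShape.up ℤ).next_eq' (by simp)
  set S := V.sc i with hS
  -- commutation as linear maps
  have hcomm1 : LinearMap.comp (V.d i n).hom (φ.f i).hom = LinearMap.comp (φ.f n).hom (V.d i n).hom :=
    congrArg ModuleCat.Hom.hom (φ.comm i n)
  have hcomm0 : LinearMap.comp (V.d p i).hom (φ.f p).hom = LinearMap.comp (φ.f i).hom (V.d p i).hom :=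
    congrArg ModuleCat.Hom.hom (φ.comm p i)
  set Z : Submodule k (V.X i) := LinearMap.ker (V.d i n).hom with hZ
  have hφZ : ∀ x ∈ Z, φ.f i x ∈ Z := by
    intro x hx
    rw [LinearMap.mem_ker] at hx ⊢
    have h2 := LinearMap.congr_fun hcomm1 x
    rw [LinearMap.comp_apply, LinearMap.comp_apply] at h2
    rw [h2, hx, map_zero]
  -- Step 1
  have h1 := my_trace_restrict_add_mapQ Z (φ.f i).hom hφZ
  -- Step 2
  have hR : ∀ y ∈ LinearMap.range (V.d i n).hom,
      φ.f n y ∈ LinearMap.range (V.d i n).hom := by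
    rintro y ⟨x, rfl⟩
    exact ⟨φ.f i x, LinearMap.congr_fun hcomm1 x⟩
  have h2 : LinearMap.trace k (V.X i ⧸ Z) (Z.mapQ Z (φ.f i).hom fun x hx => hφZ x hx) =
      LinearMap.trace k (LinearMap.range (V.d i n).hom)
        ((φ.f n).hom.restrict hR) := by
    refine my_trace_eq_of_equiv
      (LinearMap.quotKerEquivRange (V.d i n).hom) _ _ ?_
    intro xq
    obtain ⟨x, rfl⟩ := Submodule.Quotient.mk_surjective _ xq
    apply Subtype.ext
    rw [Submodule.mapQ_apply, LinearMap.restrict_coe_apply,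
      LinearMap.quotKerEquivRange_apply_mk, LinearMap.quotKerEquivRange_apply_mk]
    exact LinearMap.congr_fun hcomm1 x
  have h2' : LinearMap.trace k (LinearMap.range (V.d i n).hom)
        ((φ.f n).hom.restrict hR) =
      LinearMap.trace k (bdry V n) ((φ.f n).hom.restrict (hφB n)) :=
    my_trace_restrict_congr (range_d_congr i (n - 1) n (by omega)) _ hR (hφB n)
  -- Step 3
  set B' : Submodule k Z := LinearMap.range (S.moduleCatToCycles) with hB'
  have hφB' : ∀ x ∈ B', ((φ.f i).hom.restrict hφZ) x ∈ B' := by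
    rintro x ⟨y, rfl⟩
    exact ⟨φ.f p y, Subtype.ext (LinearMap.congr_fun hcomm0 y)⟩
  have h3 := my_trace_restrict_add_mapQ B' ((φ.f i).hom.restrict hφZ) hφB'
  -- Step 3a
  have hmap : Submodule.map Z.subtype B' = bdry V i := by
    show _ = LinearMap.range (V.d (i - 1) i).hom
    rw [← range_d_congr p (i - 1) i (by omega)]
    ext x
    simp only [Submodule.mem_map, LinearMap.mem_range]
    constructor
    · rintro ⟨z, ⟨y, rfl⟩, rfl⟩
      exact ⟨y, rfl⟩
    · rintro ⟨y, rfl⟩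
      exact ⟨S.moduleCatToCycles y, ⟨y, rfl⟩, rfl⟩
  have h' : ∀ x ∈ Submodule.map Z.subtype B', φ.f i x ∈ Submodule.map Z.subtype B' := by
    rw [hmap]; exact hφB i
  have h3a : LinearMap.trace k B' (((φ.f i).hom.restrict hφZ).restrict hφB') =
      LinearMap.trace k (bdry V i) ((φ.f i).hom.restrict (hφB i)) := by
    refine Eq.trans (my_trace_eq_of_equiv
      (Submodule.equivMapOfInjective Z.subtype (Submodule.injective_subtype Z) B')
      (((φ.f i).hom.restrict hφZ).restrict hφB') ((φ.f i).hom.restrict h') ?_)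
      (my_trace_restrict_congr hmap _ h' (hφB i))
    intro x
    apply Subtype.ext
    simp only [Submodule.coe_equivMapOfInjective_apply, LinearMap.restrict_coe_apply,
      Submodule.coe_subtype]
  -- Step 3b
  set hdat := S.moduleCatLeftHomologyData with hhdef
  set Φ := (HomologicalComplex.shortComplexFunctor (ModuleCat k) (ComplexShape.up ℤ) i).map φ
    with hΦdef
  let ψ : ShortComplex.LeftHomologyMapData Φ hdat hdat :=
    { φK := ModuleCat.ofHom ((φ.f i).hom.restrict hφZ : Z →ₗ[k] Z)
      φH := ModuleCat.ofHom (B'.mapQ B' ((φ.f i).hom.restrict hφZ) fun x hx => hφB' x hx :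
              (Z ⧸ B') →ₗ[k] (Z ⧸ B'))
      commi := by
        apply ModuleCat.hom_ext
        apply LinearMap.ext
        intro x
        rfl
      commf' := by
        apply ModuleCat.hom_ext
        apply LinearMap.ext
        intro y
        exact Subtype.ext (LinearMap.congr_fun hcomm0 y).symm
      commπ := by
        apply ModuleCat.hom_ext
        apply LinearMap.ext
        intro z
        rfl }
  have hhm : HomologicalComplex.homologyMap φ i = ShortComplex.homologyMap Φ := rfl
  have hmapeq := ψ.homologyMap_eq
  have hcm : LinearMap.comp (hdat.homologyIso.hom.hom : (S.homology : Type _) →ₗ[k] hdat.H)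
      (ShortComplex.homologyMap Φ).hom =
      LinearMap.comp ψ.φH.hom (hdat.homologyIso.hom.hom : (S.homology : Type _) →ₗ[k] hdat.H) :=
    congrArg ModuleCat.Hom.hom ψ.homologyMap_comm
  have heq1 : LinearMap.comp (hdat.homologyIso.hom.hom : (S.homology : Type _) →ₗ[k] hdat.H)
      (hdat.homologyIso.inv.hom : (hdat.H : Type _) →ₗ[k] S.homology) = LinearMap.id :=
    congrArg ModuleCat.Hom.hom hdat.homologyIso.inv_hom_id
  have heq2 : LinearMap.comp (hdat.homologyIso.inv.hom : (hdat.H : Type _) →ₗ[k] S.homology)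
      (hdat.homologyIso.hom.hom : (S.homology : Type _) →ₗ[k] hdat.H) = LinearMap.id :=
    congrArg ModuleCat.Hom.hom hdat.homologyIso.hom_inv_id
  have h3b : LinearMap.trace k (Z ⧸ B')
      (B'.mapQ B' ((φ.f i).hom.restrict hφZ) fun x hx => hφB' x hx) = 0 := by
    have h0 := htrH i
    rw [hhm] at h0
    refine Eq.trans ?_ h0
    refine (my_trace_eq_of_equiv
      (LinearEquiv.ofLinear (hdat.homologyIso.hom.hom : (S.homology : Type _) →ₗ[k] hdat.H)
        (hdat.homologyIso.inv.hom : (hdat.H : Type _) →ₗ[k] S.homology) heq1 heq2)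
      (ShortComplex.homologyMap Φ).hom _ ?_).symm
    intro x
    rw [LinearEquiv.ofLinear_apply, LinearEquiv.ofLinear_apply]
    have hcm' := LinearMap.congr_fun hcm x
    rw [LinearMap.comp_apply, LinearMap.comp_apply] at hcm'
    exact hcm'
  -- assemble
  have final : LinearMap.trace k (bdry V i) ((φ.f i).hom.restrict (hφB i)) +
      LinearMap.trace k (bdry V n) ((φ.f n).hom.restrict (hφB n)) = 0 := by
    have h0 := htr i
    rw [h1, h3, h3a, h3b, h2, h2'] at h0
    linear_combination h0
  calc LinearMap.trace k (bdry V i) ((φ.f i).hom.restrict (hφB i)) +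
      LinearMap.trace k (bdry V (i + 1)) ((φ.f (i + 1)).hom.restrict (hφB (i + 1)))
      = LinearMap.trace k (bdry V i) ((φ.f i).hom.restrict (hφB i)) +
        LinearMap.trace k (bdry V n) ((φ.f n).hom.restrict (hφB n)) := by rw [hn]
    _ = 0 := final

end main

/-- For a quasi-bounded complex, if all componentwise traces and all traces on cohomology
of a chain endomorphism `φ` vanish, then the traces of the restrictions of `φ` to the
boundary subspaces also vanish. -/
theorem stmt_15 {k : Type*} [Field k] (V : CochainComplex (ModuleCat k) ℤ)
    [∀ i : ℤ, FiniteDimensional k (V.X i)]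
    (hqb : ∃ N : ℤ, V.d N (N + 1) = 0) (φ : V ⟶ V)
    (htr : ∀ i : ℤ, LinearMap.trace k (V.X i) (φ.f i).hom = 0)
    (htrH : ∀ i : ℤ, LinearMap.trace k (V.homology i)
      (HomologicalComplex.homologyMap φ i).hom = 0)
    (hφB : ∀ i : ℤ, ∀ x ∈ bdry V i, φ.f i x ∈ bdry V i) :
    ∀ i : ℤ, LinearMap.trace k (bdry V i) ((φ.f i).hom.restrict (hφB i)) = 0 := by
  obtain ⟨N, hN⟩ := hqb
  have range_d_congr : ∀ (a b j : ℤ), a = b →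
      LinearMap.range (V.d a j).hom = LinearMap.range (V.d b j).hom := by
    rintro a b j rfl; rfl
  set t : ℤ → k := fun j => LinearMap.trace k (bdry V j) ((φ.f j).hom.restrict (hφB j)) with htdef
  have key' : ∀ j : ℤ, t j + t (j + 1) = 0 := my_key V φ htr htrH hφB
  have hbot : bdry V (N + 1) = ⊥ := by
    show LinearMap.range (V.d (N + 1 - 1) (N + 1)).hom = ⊥
    rw [range_d_congr (N + 1 - 1) N (N + 1) (by omega), hN, ModuleCat.hom_zero]
    exact LinearMap.range_zero
  have htop : t (N + 1) = 0 := by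
    have hz : ∀ x ∈ (⊥ : Submodule k (V.X (N + 1))), φ.f (N + 1) x ∈
        (⊥ : Submodule k (V.X (N + 1))) := by
      intro x hx
      simp_all
    have hcongr := my_trace_restrict_congr hbot (φ.f (N + 1)).hom (hφB (N + 1)) hz
    show LinearMap.trace k (bdry V (N + 1)) ((φ.f (N + 1)).hom.restrict (hφB (N + 1))) = 0
    rw [hcongr, Subsingleton.elim ((φ.f (N + 1)).hom.restrict hz) 0, map_zero]
  have hsucc : ∀ j : ℤ, t (j + 1) = - t j := fun j => by linear_combination key' j
  have hpred : ∀ j : ℤ, t j = - t (j + 1) := fun j => by linear_combination key' j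
  have up : ∀ m : ℕ, t (N + 1 + m) = 0 := by
    intro m
    induction m with
    | zero =>
      have hc : (N + 1 + (0 : ℕ) : ℤ) = N + 1 := by push_cast; ring
      rw [hc]; exact htop
    | succ a ih =>
      have h := hsucc (N + 1 + a)
      rw [ih, neg_zero] at h
      have hc : (N + 1 + (a + 1 : ℕ) : ℤ) = N + 1 + a + 1 := by push_cast; ring
      rw [hc]; exact h
  have down : ∀ m : ℕ, t (N + 1 - m) = 0 := by
    intro m
    induction m with
    | zero =>
      have hc : (N + 1 - (0 : ℕ) : ℤ) = N + 1 := by push_cast; ring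
      rw [hc]; exact htop
    | succ a ih =>
      have h := hpred (N + 1 - (a + 1 : ℕ))
      have hc : (N + 1 - (a + 1 : ℕ) : ℤ) + 1 = N + 1 - a := by push_cast; ring
      rw [hc, ih, neg_zero] at h
      exact h
  intro i
  show t i = 0
  rcases le_or_gt (N + 1) i with hle | hlt
  · obtain ⟨m, hm⟩ : ∃ m : ℕ, i = N + 1 + m := ⟨(i - (N + 1)).toNat, by omega⟩
    rw [hm]; exact up m
  · obtain ⟨m, hm⟩ : ∃ m : ℕ, i = N + 1 - m := ⟨(N + 1 - i).toNat, by omega⟩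
    rw [hm]; exact down m
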